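/- Let k be a field, A a finite-dimensional k-algebra, and M, X finite-dimensional right A-modules. If there exists an add M-approximating sequence for X, then there exists a minimal add M-approximating sequence 0 → M1' → M0' → X → 0 for X, and it is a direct summand of any add M-approximating sequence: for every add M-approximating sequence 0 → M1 → M0 → X → 0 there exist section morphisms (split monomorphisms) u : M1' → M1 and v : M0' → M0 forming, together with the identity of X, a morphism of short exact sequences. -/

import Mathlib

/-!
Statement 3.  Let `k` be a field, `A` a finite-dimensional `k`-algebra, and `M, X`
finite-dimensional right `A`-modules.  If there exists an `add M`-approximating sequence
for `X`, then there exists a minimal `add M`-approximating sequence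
`0 → M₁' → M₀' → X → 0` for `X`, and it is a direct summand of any `add M`-approximating
sequence: for every `add M`-approximating sequence `0 → M₁ → M₀ → X → 0` there exist
split monomorphisms `u : M₁' → M₁` and `v : M₀' → M₀` forming, together with the identity
of `X`, a morphism of short exact sequences.

Right `A`-modules are formalized as modules over `Aᵐᵒᵖ`.
-/

/-- `X` belongs to `add M`: it is (isomorphic to) a direct summand of a finite direct sum
of copies of `M`. -/
def InAdd (R : Type) [Ring R] (M X : Type) [AddCommGroup M] [Module R M]
    [AddCommGroup X] [Module R X] : Prop :=
  ∃ (n : ℕ) (i : X →ₗ[R] (Fin n → M)) (p : (Fin n → M) →ₗ[R] X),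
    p ∘ₗ i = LinearMap.id

/-- `f₀ : M₀ → X` is an `add M`-approximation of `X`: every morphism `f : M' → X` with
`M'` in `add M` factors through `f₀`. -/
def IsAddApprox (R : Type) [Ring R] (M : Type) [AddCommGroup M] [Module R M]
    {M₀ X : Type} [AddCommGroup M₀] [Module R M₀] [AddCommGroup X] [Module R X]
    (f₀ : M₀ →ₗ[R] X) : Prop :=
  ∀ (M' : Type) [AddCommGroup M'] [Module R M'], InAdd R M M' →
    ∀ f : M' →ₗ[R] X, ∃ g : M' →ₗ[R] M₀, f₀ ∘ₗ g = f

/-- `f₀ : M₀ → X` is right minimal: every endomorphism `g` of `M₀` with `f₀ ∘ g = f₀`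
is an automorphism. -/
def RightMinimal (R : Type) [Ring R] {M₀ X : Type} [AddCommGroup M₀] [Module R M₀]
    [AddCommGroup X] [Module R X] (f₀ : M₀ →ₗ[R] X) : Prop :=
  ∀ g : M₀ →ₗ[R] M₀, f₀ ∘ₗ g = f₀ → Function.Bijective g

/-- An `add M`-approximating sequence `0 → M₁ → M₀ → X → 0` for `X`: a short exact
sequence with `M₁, M₀` in `add M` whose epimorphism `M₀ → X` is an
`add M`-approximation. -/
structure ApproxSeq (R : Type) [Ring R] (M X : Type) [AddCommGroup M] [Module R M]
    [AddCommGroup X] [Module R X] where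
  M₁ : Type
  M₀ : Type
  [acg₁ : AddCommGroup M₁]
  [acg₀ : AddCommGroup M₀]
  [mod₁ : Module R M₁]
  [mod₀ : Module R M₀]
  ι : M₁ →ₗ[R] M₀
  π : M₀ →ₗ[R] X
  mono : Function.Injective ι
  exact : LinearMap.range ι = LinearMap.ker π
  epi : Function.Surjective π
  mem₁ : InAdd R M M₁
  mem₀ : InAdd R M M₀
  approx : IsAddApprox R M π

attribute [instance] ApproxSeq.acg₁ ApproxSeq.acg₀ ApproxSeq.mod₁ ApproxSeq.mod₀

set_option linter.unusedSectionVars false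


theorem inAdd_of_split {R M N N' : Type} [Ring R] [AddCommGroup M] [Module R M]
    [AddCommGroup N] [Module R N] [AddCommGroup N'] [Module R N']
    (i : N →ₗ[R] N') (p : N' →ₗ[R] N) (hpi : p ∘ₗ i = LinearMap.id)
    (h : InAdd R M N') : InAdd R M N := by
  obtain ⟨n, i', p', h'⟩ := h
  refine ⟨n, i' ∘ₗ i, p ∘ₗ p', ?_⟩
  ext x
  have h'x : p' (i' (i x)) = i x := congrArg (fun f => f (i x)) (congrArg DFunLike.coe h')
  have hpix : p (i x) = x := congrArg (fun f => f x) (congrArg DFunLike.coe hpi)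
  simp [h'x, hpix]

variable {R M X : Type} [Ring R] [AddCommGroup M] [Module R M]
    [AddCommGroup X] [Module R X]

/-- The identification of `M₁` with the kernel of `π`. -/
noncomputable def kerEquiv (S : ApproxSeq R M X) : S.M₁ ≃ₗ[R] ↥(LinearMap.ker S.π) :=
  (LinearEquiv.ofInjective S.ι S.mono).trans (LinearEquiv.ofEq _ _ S.exact)

theorem kerEquiv_coe (S : ApproxSeq R M X) (y : S.M₁) :
    ((kerEquiv S y : ↥(LinearMap.ker S.π)) : S.M₀) = S.ι y := by
  simp [kerEquiv]

theorem kerEquiv_symm (S : ApproxSeq R M X) (z : ↥(LinearMap.ker S.π)) :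
    S.ι ((kerEquiv S).symm z) = (z : S.M₀) := by
  conv_rhs => rw [← (kerEquiv S).apply_symm_apply z]
  rw [kerEquiv_coe]

/-- Restricting an approximating sequence to the range of an idempotent-up-to-Fitting
endomorphism compatible with `π`. -/
noncomputable def restrictSeq (S : ApproxSeq R M X) (h : S.M₀ →ₗ[R] S.M₀)
    (hπ : S.π ∘ₗ h = S.π)
    (hc : IsCompl (LinearMap.ker h) (LinearMap.range h)) : ApproxSeq R M X := by
  have hπh : ∀ x, S.π (h x) = S.π x := fun x =>
    congrArg (fun f => f x) (congrArg DFunLike.coe hπ)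
  set q : Submodule R S.M₀ := LinearMap.range h with hq
  set π' : ↥q →ₗ[R] X := S.π ∘ₗ q.subtype with hπ'
  set K : Submodule R ↥q := LinearMap.ker π' with hK
  -- the projection of S.M₀ onto q along ker h
  set pr : S.M₀ →ₗ[R] ↥q := Submodule.linearProjOfIsCompl q (LinearMap.ker h) hc.symm
    with hpr
  have hker_sub : ∀ x : S.M₀, x ∈ LinearMap.ker h → S.π x = 0 := by
    intro x hx
    rw [LinearMap.mem_ker] at hx
    rw [← hπh x, hx, map_zero]
  have hpr_pi : ∀ x : S.M₀, S.π ((pr x : ↥q) : S.M₀) = S.π x := by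
    intro x
    have hdec : (((LinearMap.ker h).linearProjOfIsCompl q hc x : S.M₀))
        + ((pr x : ↥q) : S.M₀) = x := Submodule.projection_add_projection_eq_self hc x
    have h0 : S.π (((LinearMap.ker h).linearProjOfIsCompl q hc x : S.M₀)) = 0 :=
      hker_sub _ (SetLike.coe_mem _)
    calc S.π ((pr x : ↥q) : S.M₀)
        = S.π (((LinearMap.ker h).linearProjOfIsCompl q hc x : S.M₀))
            + S.π ((pr x : ↥q) : S.M₀) := by rw [h0, zero_add]
      _ = S.π (((LinearMap.ker h).linearProjOfIsCompl q hc x : S.M₀)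
            + ((pr x : ↥q) : S.M₀)) := (map_add _ _ _).symm
      _ = S.π x := by rw [hdec]
  have hpr_left : ∀ x : ↥q, pr (x : S.M₀) = x := fun x =>
    Submodule.linearProjOfIsCompl_apply_left hc.symm x
  -- cod-restriction of pr to a map (ker S.π) → K
  have hpr_mem : ∀ z : ↥(LinearMap.ker S.π), pr (z : S.M₀) ∈ K := by
    intro z
    have : S.π ((pr (z : S.M₀) : ↥q) : S.M₀) = 0 := by
      rw [hpr_pi]; exact z.2
    simpa [hK, hπ', LinearMap.mem_ker] using this
  refine
  { M₁ := ↥K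
    M₀ := ↥q
    ι := K.subtype
    π := π'
    mono := K.injective_subtype
    exact := K.range_subtype
    epi := ?_
    mem₁ := ?_
    mem₀ := ?_
    approx := ?_ }
  · -- epi
    intro x
    obtain ⟨m, hm⟩ := S.epi x
    refine ⟨⟨h m, LinearMap.mem_range_self h m⟩, ?_⟩
    show S.π (h m) = x
    rw [hπh, hm]
  · -- mem₁ : K is a summand of M₁
    set e := kerEquiv S with he
    set j : ↥K →ₗ[R] ↥(LinearMap.ker S.π) :=
      LinearMap.codRestrict (LinearMap.ker S.π) (q.subtype ∘ₗ K.subtype)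
        (fun x => by
          have : S.π ((x : ↥q) : S.M₀) = 0 := x.2
          simpa [LinearMap.mem_ker] using this) with hj
    set i₁ : ↥K →ₗ[R] S.M₁ := e.symm.toLinearMap ∘ₗ j with hi₁
    set p₁ : S.M₁ →ₗ[R] ↥K :=
      LinearMap.codRestrict K (pr ∘ₗ (LinearMap.ker S.π).subtype ∘ₗ e.toLinearMap)
        (fun y => hpr_mem (e y)) with hp₁
    refine inAdd_of_split i₁ p₁ ?_ S.mem₁
    ext x
    show (((pr ((e (e.symm (j x)) : ↥(LinearMap.ker S.π)) : S.M₀)) : ↥q) : S.M₀)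
      = ((x : ↥q) : S.M₀)
    rw [e.apply_symm_apply]
    have : ((j x : ↥(LinearMap.ker S.π)) : S.M₀) = ((x : ↥q) : S.M₀) := rfl
    rw [this, hpr_left]
  · -- mem₀ : q is a summand of M₀
    refine inAdd_of_split q.subtype pr ?_ S.mem₀
    exact Submodule.linearProjOfIsCompl_comp_subtype hc.symm
  · -- approx
    intro M' _ _ hM' f
    obtain ⟨g', hg'⟩ := S.approx M' hM' f
    refine ⟨LinearMap.codRestrict q (h ∘ₗ g') (fun x => LinearMap.mem_range_self h _), ?_⟩
    ext x
    show S.π (h (g' x)) = f x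
    rw [hπh]
    exact congrArg (fun f => f x) (congrArg DFunLike.coe hg')

theorem compare (S T : ApproxSeq R M X) (hmin : RightMinimal R S.π) :
    ∃ (u : S.M₁ →ₗ[R] T.M₁) (v : S.M₀ →ₗ[R] T.M₀),
      (∃ u' : T.M₁ →ₗ[R] S.M₁, u' ∘ₗ u = LinearMap.id) ∧
      (∃ v' : T.M₀ →ₗ[R] S.M₀, v' ∘ₗ v = LinearMap.id) ∧
      v ∘ₗ S.ι = T.ι ∘ₗ u ∧ T.π ∘ₗ v = S.π := by
  obtain ⟨v, hv⟩ := T.approx S.M₀ S.mem₀ S.π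
  obtain ⟨w, hw⟩ := S.approx T.M₀ T.mem₀ T.π
  have hvx : ∀ x, T.π (v x) = S.π x := fun x =>
    congrArg (fun f => f x) (congrArg DFunLike.coe hv)
  have hwx : ∀ x, S.π (w x) = T.π x := fun x =>
    congrArg (fun f => f x) (congrArg DFunLike.coe hw)
  set φ : S.M₀ →ₗ[R] S.M₀ := w ∘ₗ v with hφ
  have hφπ : S.π ∘ₗ φ = S.π := by
    ext x
    show S.π (w (v x)) = S.π x
    rw [hwx, hvx]
  have hbij := hmin φ hφπ
  set eφ := LinearEquiv.ofBijective φ hbij with heφ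
  have heφx : ∀ x, eφ x = φ x := fun x => rfl
  set v' : T.M₀ →ₗ[R] S.M₀ := eφ.symm.toLinearMap ∘ₗ w with hv'
  have hv'v : v' ∘ₗ v = LinearMap.id := by
    ext x
    show eφ.symm (w (v x)) = x
    have : w (v x) = eφ x := rfl
    rw [this, eφ.symm_apply_apply]
  have hπφ : ∀ x, S.π (φ x) = S.π x := fun x =>
    congrArg (fun f => f x) (congrArg DFunLike.coe hφπ)
  have hπsymm : ∀ y, S.π (eφ.symm y) = S.π y := by
    intro y
    conv_rhs => rw [← eφ.apply_symm_apply y]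
    rw [heφx, hπφ]
  have hπv' : ∀ x, S.π (v' x) = T.π x := by
    intro x
    show S.π (eφ.symm (w x)) = T.π x
    rw [hπsymm, hwx]
  -- now the maps on kernels
  set u : S.M₁ →ₗ[R] T.M₁ :=
    (kerEquiv T).symm.toLinearMap ∘ₗ
      LinearMap.codRestrict (LinearMap.ker T.π) (v ∘ₗ S.ι)
        (fun x => by
          have h1 : S.ι x ∈ LinearMap.ker S.π := S.exact ▸ LinearMap.mem_range_self S.ι x
          have : T.π (v (S.ι x)) = 0 := by
            rw [hvx]; exact h1
          simpa [LinearMap.mem_ker] using this) with hu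
  set u' : T.M₁ →ₗ[R] S.M₁ :=
    (kerEquiv S).symm.toLinearMap ∘ₗ
      LinearMap.codRestrict (LinearMap.ker S.π) (v' ∘ₗ T.ι)
        (fun y => by
          have h1 : T.ι y ∈ LinearMap.ker T.π := T.exact ▸ LinearMap.mem_range_self T.ι y
          have : S.π (v' (T.ι y)) = 0 := by
            rw [hπv']; exact h1
          simpa [LinearMap.mem_ker] using this) with hu'
  have hTu : ∀ x, T.ι (u x) = v (S.ι x) := by
    intro x
    show T.ι ((kerEquiv T).symm _) = v (S.ι x)
    rw [kerEquiv_symm]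
    rfl
  have hSu' : ∀ y, S.ι (u' y) = v' (T.ι y) := by
    intro y
    show S.ι ((kerEquiv S).symm _) = v' (T.ι y)
    rw [kerEquiv_symm]
    rfl
  refine ⟨u, v, ⟨u', ?_⟩, ⟨v', hv'v⟩, ?_, hv⟩
  · ext x
    apply S.mono
    show S.ι (u' (u x)) = S.ι x
    rw [hSu', hTu]
    have : v' (v (S.ι x)) = (v' ∘ₗ v) (S.ι x) := rfl
    rw [this, hv'v]
    rfl
  · ext x
    show v (S.ι x) = T.ι (u x)
    rw [hTu]

section Min

variable (k : Type) [Field k] [Algebra k R] [Module.Finite k R]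

def kModule (N : Type) [AddCommGroup N] [Module R N] : Module k N :=
  Module.compHom N (algebraMap k R)

theorem kTower (N : Type) [AddCommGroup N] [Module R N] :
    letI := kModule (R := R) k N; IsScalarTower k R N := by
  letI := kModule (R := R) k N
  refine ⟨fun a r x => ?_⟩
  show (a • r) • x = algebraMap k R a • (r • x)
  rw [Algebra.smul_def, mul_smul]

theorem finite_of_inAdd' (N : Type) [AddCommGroup N] [Module R N]
    [Module k M] [IsScalarTower k R M] [Module.Finite k M]
    [Module k N] [IsScalarTower k R N]
    (h : InAdd R M N) : Module.Finite k N := by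
  obtain ⟨n, i, p, hpi⟩ := h
  have hsurj : Function.Surjective p := fun x =>
    ⟨i x, congrArg (fun f => f x) (congrArg DFunLike.coe hpi)⟩
  exact Module.Finite.of_surjective (p.restrictScalars k) hsurj

/-- The `k`-dimension of the middle term of an approximating sequence. -/
noncomputable def seqRank (S : ApproxSeq R M X) : ℕ :=
  letI := kModule (R := R) k S.M₀
  Module.finrank k S.M₀

theorem kFinrank_eq_of_requiv (N N' : Type) [AddCommGroup N] [Module R N]
    [AddCommGroup N'] [Module R N'] (e : N ≃ₗ[R] N') :
    (letI := kModule (R := R) k N; Module.finrank k N)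
      = (letI := kModule (R := R) k N'; Module.finrank k N') := by
  letI := kModule (R := R) k N
  letI := kModule (R := R) k N'
  haveI := kTower (R := R) k N
  haveI := kTower (R := R) k N'
  exact (e.restrictScalars k).finrank_eq

include k in
theorem exists_rightMinimal [Module.Finite R M] (hex : Nonempty (ApproxSeq R M X)) :
    ∃ S : ApproxSeq R M X, RightMinimal R S.π := by
  classical
  obtain ⟨T0⟩ := hex
  have hset : ∃ n, ∃ S : ApproxSeq R M X, seqRank k S = n := ⟨_, T0, rfl⟩
  obtain ⟨S, hSmin⟩ : ∃ S : ApproxSeq R M X, ∀ T, seqRank k S ≤ seqRank k T := by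
    obtain ⟨S, hS⟩ := Nat.find_spec hset
    exact ⟨S, fun T => hS ▸ Nat.find_min' hset ⟨T, rfl⟩⟩
  refine ⟨S, ?_⟩
  intro g hg
  letI mk : Module k S.M₀ := kModule (R := R) k S.M₀
  haveI : IsScalarTower k R S.M₀ := kTower (R := R) k S.M₀
  letI : Module k M := kModule (R := R) k M
  haveI : IsScalarTower k R M := kTower (R := R) k M
  haveI : Module.Finite k M := Module.Finite.trans R M
  haveI hfin : Module.Finite k S.M₀ := finite_of_inAdd' k S.M₀ S.mem₀
  haveI : IsNoetherian k S.M₀ := inferInstance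
  haveI : IsNoetherian R S.M₀ := isNoetherian_of_tower k inferInstance
  haveI : IsArtinian R S.M₀ := isArtinian_of_tower k inferInstance
  haveI : FiniteDimensional k S.M₀ := hfin
  -- Fitting decomposition
  obtain ⟨N, hN⟩ := Filter.eventually_atTop.mp g.eventually_isCompl_ker_pow_range_pow
  set n := max N 1 with hn
  have hc := hN n (le_max_left _ _)
  have hπpow : ∀ m, S.π ∘ₗ (g ^ m) = S.π := by
    intro m
    induction m with
    | zero => ext x; rfl
    | succ m ih =>
      ext x
      show S.π ((g ^ (m + 1)) x) = S.π x
      rw [pow_succ, Module.End.mul_apply]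
      have h1 : S.π (g x) = S.π x := congrArg (fun f => f x) (congrArg DFunLike.coe hg)
      have h2 : S.π ((g ^ m) (g x)) = S.π (g x) :=
        congrArg (fun f => f (g x)) (congrArg DFunLike.coe ih)
      rw [h2, h1]
  set h := g ^ n with hh
  have htop : LinearMap.range h = ⊤ := by
    by_contra hne
    set q : Submodule R S.M₀ := LinearMap.range h with hq
    set T' := restrictSeq S h (hπpow n) hc with hT'
    have e1 : seqRank k T' = (letI := kModule (R := R) k ↥q; Module.finrank k ↥q) :=
      kFinrank_eq_of_requiv k T'.M₀ ↥q (by unfold restrictSeq at hT'; exact LinearEquiv.refl R ↥q)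
    have e2 : (letI := kModule (R := R) k ↥q; Module.finrank k ↥q)
        = Module.finrank k ↥(q.restrictScalars k) :=
      (kFinrank_eq_of_requiv k ↥q ↥(q.restrictScalars k)
        (Submodule.restrictScalarsEquiv k R S.M₀ q).symm).trans rfl
    have hlt : q.restrictScalars k < ⊤ := by
      rw [lt_top_iff_ne_top]
      intro habs
      apply hne
      have : q.restrictScalars k = (⊤ : Submodule R S.M₀).restrictScalars k := by
        rw [habs, Submodule.restrictScalars_top]
      exact Submodule.restrictScalars_injective k R S.M₀ this
    have e3 : Module.finrank k ↥(q.restrictScalars k) < Module.finrank k S.M₀ :=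
      Submodule.finrank_lt hlt.ne
    have hrank : seqRank k T' < seqRank k S := by
      rw [e1, e2]
      exact e3
    exact absurd (hSmin T') (not_le.mpr hrank)
  have hhsurj : Function.Surjective h := LinearMap.range_eq_top.mp htop
  have hgsurj : Function.Surjective g := by
    obtain ⟨m, hm⟩ : ∃ m, n = m + 1 := ⟨n - 1, by omega⟩
    have : ⇑h = ⇑g ∘ ⇑(g ^ m) := by
      funext x
      rw [hh, hm, pow_succ', Module.End.mul_apply]
      rfl
    rw [this] at hhsurj
    exact hhsurj.of_comp
  have hginj : Function.Injective g := by
    have := (LinearMap.injective_iff_surjective (f := g.restrictScalars k)).mpr hgsurj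
    exact this
  exact ⟨hginj, hgsurj⟩

end Min


theorem stmt_3 (k A : Type) [Field k] [Ring A] [Algebra k A] [FiniteDimensional k A]
    (M X : Type)
    [AddCommGroup M] [Module Aᵐᵒᵖ M] [Module.Finite Aᵐᵒᵖ M]
    [AddCommGroup X] [Module Aᵐᵒᵖ X] [Module.Finite Aᵐᵒᵖ X]
    (hex : Nonempty (ApproxSeq Aᵐᵒᵖ M X)) :
    ∃ S : ApproxSeq Aᵐᵒᵖ M X, RightMinimal Aᵐᵒᵖ S.π ∧
      ∀ T : ApproxSeq Aᵐᵒᵖ M X,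
        ∃ (u : S.M₁ →ₗ[Aᵐᵒᵖ] T.M₁) (v : S.M₀ →ₗ[Aᵐᵒᵖ] T.M₀),
          (∃ u' : T.M₁ →ₗ[Aᵐᵒᵖ] S.M₁, u' ∘ₗ u = LinearMap.id) ∧
          (∃ v' : T.M₀ →ₗ[Aᵐᵒᵖ] S.M₀, v' ∘ₗ v = LinearMap.id) ∧
          v ∘ₗ S.ι = T.ι ∘ₗ u ∧ T.π ∘ₗ v = S.π := by
  haveI : Module.Finite k Aᵐᵒᵖ := Module.Finite.equiv (MulOpposite.opLinearEquiv k)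
  obtain ⟨S, hS⟩ := exists_rightMinimal (R := Aᵐᵒᵖ) (M := M) (X := X) k hex
  exact ⟨S, hS, fun T => compare S T hS⟩
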